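/- There are no elements x, y, z of the field ℚ_29 of 29-adic numbers with (x, y, z) ≠ (0, 0, 0) such that 3x^7 + 4y^7 + 5z^7 = 0. -/

import Mathlib

instance : Fact (Nat.Prime 29) := ⟨by norm_num⟩

set_option maxRecDepth 10000 in
private lemma zmod_key : ∀ a b c : ZMod 29, 3*a^7+4*b^7+5*c^7 = 0 →
    a = 0 ∧ b = 0 ∧ c = 0 := by decide

private lemma dvd_of_eq_zero (a b c : ℤ_[29]) (h : 3*a^7+4*b^7+5*c^7 = 0) :
    (29 : ℤ_[29]) ∣ a ∧ (29 : ℤ_[29]) ∣ b ∧ (29 : ℤ_[29]) ∣ c := by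
  have h2 : (3 : ZMod 29) * (PadicInt.toZMod a)^7 + 4 * (PadicInt.toZMod b)^7
      + 5 * (PadicInt.toZMod c)^7 = 0 := by
    have := congrArg (PadicInt.toZMod (p := 29)) h
    push_cast [map_add, map_mul, map_pow, map_ofNat] at this
    simpa using this
  obtain ⟨ha, hb, hc⟩ := zmod_key _ _ _ h2
  have key : ∀ x : ℤ_[29], PadicInt.toZMod x = 0 → (29 : ℤ_[29]) ∣ x := by
    intro x hx
    have : x ∈ RingHom.ker (PadicInt.toZMod : ℤ_[29] →+* ZMod 29) := hx
    rw [PadicInt.ker_toZMod, PadicInt.maximalIdeal_eq_span_p,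
      Ideal.mem_span_singleton] at this
    exact_mod_cast this
  exact ⟨key a ha, key b hb, key c hc⟩

private lemma norm29_int : ‖(29 : ℤ_[29])‖ = (29:ℝ)⁻¹ := by
  rw [show ((29:ℤ_[29])) = (((29:ℕ)):ℤ_[29]) by norm_num, PadicInt.norm_p]
  norm_num

private lemma norm29_q : ‖(29 : ℚ_[29])‖ = (29:ℝ)⁻¹ := by
  rw [show ((29:ℚ_[29])) = (((29:ℕ)):ℚ_[29]) by norm_num, Padic.norm_p]
  norm_num

private lemma h29_ne : (29 : ℤ_[29]) ≠ 0 := by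
  have : ((29 : ℕ) : ℤ_[29]) ≠ 0 := Nat.cast_ne_zero.2 (by norm_num)
  exact_mod_cast this

private lemma descent : ∀ n : ℕ, ∀ a b c : ℤ_[29],
    3*a^7+4*b^7+5*c^7 = 0 →
    (29 : ℤ_[29])^n ∣ a ∧ (29 : ℤ_[29])^n ∣ b ∧ (29 : ℤ_[29])^n ∣ c := by
  intro n
  induction n with
  | zero => intro a b c _; simp
  | succ n ih =>
    intro a b c h
    obtain ⟨⟨a', rfl⟩, ⟨b', rfl⟩, ⟨c', rfl⟩⟩ := dvd_of_eq_zero a b c h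
    have h' : 3*a'^7+4*b'^7+5*c'^7 = 0 := by
      have h0 : (29:ℤ_[29])^7 * (3*a'^7+4*b'^7+5*c'^7) = 0 := by
        linear_combination h
      exact (mul_eq_zero.mp h0).resolve_left (pow_ne_zero _ h29_ne)
    obtain ⟨⟨d, hd⟩, ⟨e, he⟩, ⟨f, hf⟩⟩ := ih a' b' c' h'
    exact ⟨⟨d, by rw [hd]; ring⟩, ⟨e, by rw [he]; ring⟩, ⟨f, by rw [hf]; ring⟩⟩

private lemma zero_of_all_dvd (x : ℤ_[29]) (hx : ∀ n : ℕ, (29 : ℤ_[29])^n ∣ x) :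
    x = 0 := by
  by_contra hx0
  have hpos : 0 < ‖x‖ := norm_pos_iff.mpr hx0
  obtain ⟨n, hn⟩ := exists_pow_lt_of_lt_one hpos (by norm_num : ((29:ℝ))⁻¹ < 1)
  obtain ⟨d, rfl⟩ := hx n
  have hle : ‖(29:ℤ_[29])^n * d‖ ≤ ((29:ℝ))⁻¹^n := by
    rw [norm_mul, norm_pow, norm29_int]
    calc ((29:ℝ)⁻¹)^n * ‖d‖ ≤ ((29:ℝ)⁻¹)^n * 1 :=
          mul_le_mul_of_nonneg_left d.norm_le_one (by positivity)
      _ = ((29:ℝ)⁻¹)^n := mul_one _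
  linarith

private lemma int_zero (a b c : ℤ_[29]) (h : 3*a^7+4*b^7+5*c^7 = 0) :
    a = 0 ∧ b = 0 ∧ c = 0 :=
  ⟨zero_of_all_dvd a fun n => (descent n a b c h).1,
   zero_of_all_dvd b fun n => (descent n a b c h).2.1,
   zero_of_all_dvd c fun n => (descent n a b c h).2.2⟩

private lemma exists_scale (w : ℚ_[29]) : ∃ n : ℕ, ‖(29:ℚ_[29])^n * w‖ ≤ 1 := by
  obtain ⟨n, hn⟩ := pow_unbounded_of_one_lt (R := ℝ) ‖w‖ (by norm_num : (1:ℝ) < 29)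
  refine ⟨n, ?_⟩
  rw [norm_mul, norm_pow, norm29_q]
  rw [inv_pow]
  rw [inv_mul_le_iff₀ (by positivity), mul_one]
  exact le_of_lt hn

theorem no_Q29_points_3_4_5 :
    ¬ ∃ x y z : ℚ_[29], (x, y, z) ≠ (0, 0, 0) ∧
      3 * x ^ 7 + 4 * y ^ 7 + 5 * z ^ 7 = 0 := by
  rintro ⟨x, y, z, hne, heq⟩
  obtain ⟨nx, hnx⟩ := exists_scale x
  obtain ⟨ny, hny⟩ := exists_scale y
  obtain ⟨nz, hnz⟩ := exists_scale z
  have hq29 : (29 : ℚ_[29]) ≠ 0 := by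
    have : ((29 : ℕ) : ℚ_[29]) ≠ 0 := Nat.cast_ne_zero.2 (by norm_num)
    exact_mod_cast this
  set N := nx + ny + nz with hN
  have hscale : ∀ (w : ℚ_[29]) (n : ℕ), ‖(29:ℚ_[29])^n * w‖ ≤ 1 → n ≤ N →
      ‖(29:ℚ_[29])^N * w‖ ≤ 1 := by
    intro w n hw hnN
    obtain ⟨k, hk⟩ := Nat.exists_eq_add_of_le hnN
    have h1 : (29:ℚ_[29])^N * w = (29:ℚ_[29])^k * ((29:ℚ_[29])^n * w) := by
      rw [hk]; ring
    rw [h1, norm_mul, norm_pow, norm29_q]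
    calc ((29:ℝ)⁻¹)^k * ‖(29:ℚ_[29])^n * w‖ ≤ 1 * 1 := by
          apply mul_le_mul _ hw (norm_nonneg _) zero_le_one
          apply pow_le_one₀ (by positivity) (by norm_num)
      _ = 1 := one_mul 1
  have hx1 : ‖(29:ℚ_[29])^N * x‖ ≤ 1 := hscale x nx hnx (by omega)
  have hy1 : ‖(29:ℚ_[29])^N * y‖ ≤ 1 := hscale y ny hny (by omega)
  have hz1 : ‖(29:ℚ_[29])^N * z‖ ≤ 1 := hscale z nz hnz (by omega)
  set a : ℤ_[29] := ⟨_, hx1⟩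
  set b : ℤ_[29] := ⟨_, hy1⟩
  set c : ℤ_[29] := ⟨_, hz1⟩
  have habc : 3*a^7+4*b^7+5*c^7 = 0 := by
    apply Subtype.ext
    push_cast
    show 3*((29:ℚ_[29])^N * x)^7 + 4*((29:ℚ_[29])^N * y)^7
        + 5*((29:ℚ_[29])^N * z)^7 = 0
    linear_combination ((29:ℚ_[29])^N)^7 * heq
  obtain ⟨ha, hb, hc⟩ := int_zero a b c habc
  have hxz : x = 0 := by
    have := congrArg (Subtype.val) ha
    simp only [a] at this
    have h0 : (29:ℚ_[29])^N * x = 0 := this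
    rcases mul_eq_zero.mp h0 with h | h
    · exact absurd h (pow_ne_zero _ hq29)
    · exact h
  have hyz : y = 0 := by
    have := congrArg (Subtype.val) hb
    have h0 : (29:ℚ_[29])^N * y = 0 := this
    rcases mul_eq_zero.mp h0 with h | h
    · exact absurd h (pow_ne_zero _ hq29)
    · exact h
  have hzz : z = 0 := by
    have := congrArg (Subtype.val) hc
    have h0 : (29:ℚ_[29])^N * z = 0 := this
    rcases mul_eq_zero.mp h0 with h | h
    · exact absurd h (pow_ne_zero _ hq29)
    · exact h
  exact hne (by simp [hxz, hyz, hzz])
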